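/- Let (X,∼), U ≤ Sym(X,∼), τ ∈ Sym(X,∼) satisfy: U fixes a point ∞ and acts sharply transitively on X∖[∞]; the induced action of U on X̄ is sharply transitive on X̄∖{[∞]}; ∞τ ≁ ∞ and ∞τ² = ∞. Then the data M(U,τ) constructed by defining U_∞ := U, U_0 := U^τ, U_x := U_0^{α_x} for x ≁ ∞ and U_x := U_∞^{γ_{xτ^{-1}}} for x ∼ ∞ is a local Moufang set if and only if the Hua maps h_x = τ α_x τ^{-1} α_{−(xτ^{-1})} τ α_{−(−(xτ^{-1}))τ} normalize U for all units x. -/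

import Mathlib

/-!
Local Moufang sets, following E. Rijcken, "Local Moufang sets".
A local Moufang set is a set `X` with an equivalence relation (a `Setoid`)
having more than 2 classes, together with root groups `U x` of
equivalence-preserving permutations, satisfying (LM0), (LM1), (LM1'), (LM2).
We use left actions; the paper's right-composition word `a₁a₂⋯aₙ` corresponds
to our product `aₙ * ⋯ * a₁`, and the paper's conjugation `g^h = h⁻¹gh`
corresponds to `h * g * h⁻¹` (i.e. `MulAut.conj h g`).
-/

variable {X : Type*}

/-- A permutation of `X` preserves the equivalence relation `r`. -/
def PreservesRel (r : Setoid X) (g : Equiv.Perm X) : Prop :=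
  ∀ a b : X, r.r a b ↔ r.r (g a) (g b)

/-- A local pre-Moufang set: axioms (LM0), (LM1), (LM1'). -/
structure IsLocalPreMoufangSet (r : Setoid X) (U : X → Subgroup (Equiv.Perm X)) : Prop where
  /-- `X` has more than two equivalence classes. -/
  big : ∃ a b c : X, ¬ r.r a b ∧ ¬ r.r a c ∧ ¬ r.r b c
  /-- root groups consist of equivalence-preserving permutations -/
  preserves : ∀ x : X, ∀ g ∈ U x, PreservesRel r g
  /-- (LM0): if `x ∼ y` then the induced actions of `U x` and `U y` on the quotient agree -/
  lm0 : ∀ x y : X, r.r x y → ∀ g ∈ U x, ∃ h ∈ U y, ∀ a : X, r.r (g a) (h a)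
  /-- (LM1): `U x` fixes `x` ... -/
  fixes : ∀ x : X, ∀ g ∈ U x, g x = x
  /-- (LM1): ... and acts sharply transitively on the complement of the class of `x` -/
  lm1 : ∀ x a b : X, ¬ r.r a x → ¬ r.r b x → ∃! g : Equiv.Perm X, g ∈ U x ∧ g a = b
  /-- (LM1'): the induced action on the quotient is transitive away from the class of `x` ... -/
  lm1'_trans : ∀ x a b : X, ¬ r.r a x → ¬ r.r b x → ∃ g ∈ U x, r.r (g a) b
  /-- (LM1'): ... and sharply so -/
  lm1'_sharp : ∀ x : X, ∀ g ∈ U x, ∀ h ∈ U x, ∀ a : X, ¬ r.r a x →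
    r.r (g a) (h a) → ∀ b : X, r.r (g b) (h b)

/-- A local Moufang set: a local pre-Moufang set satisfying (LM2). -/
structure IsLocalMoufangSet (r : Setoid X) (U : X → Subgroup (Equiv.Perm X))
    extends IsLocalPreMoufangSet r U : Prop where
  /-- (LM2): `U x ^ g = U (x g)` for all `g` in the little projective group `⟨U y : y⟩` -/
  lm2 : ∀ x : X, ∀ g ∈ (⨆ y : X, U y), (U x).map (MulAut.conj g).toMonoidHom = U (g x)

/-- The family of root groups of the construction `M(U, τ)`; here `i = ∞`, `0 = τ ∞`,
`α x` is the unique element of `U` with `0 · α_x = x` (for `x ≁ ∞`), and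
`γ_x = α_x^τ`.  For `x ≁ ∞`, `U_x := U_0 ^ α_x = (U^τ)^{α_x}` which with left
actions is the conjugate of `U` by `α_x * τ`; for `x ∼ ∞`,
`U_x := U ^ γ_{xτ⁻¹}`, the conjugate of `U` by `τ * α_{τ⁻¹ x} * τ⁻¹`. -/
noncomputable def constructedU (r : Setoid X) (U : Subgroup (Equiv.Perm X))
    (τ : Equiv.Perm X) (α : X → Equiv.Perm X) (i : X) : X → Subgroup (Equiv.Perm X) :=
  fun x =>
    letI := Classical.dec (r.r x i)
    if r.r x i then U.map (MulAut.conj (τ * α (τ⁻¹ x) * τ⁻¹)).toMonoidHom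
    else U.map (MulAut.conj (α x * τ)).toMonoidHom

/-- `-x := 0 · α_x⁻¹`, where `o = 0`. -/
def negOf (α : X → Equiv.Perm X) (o x : X) : X := (α x)⁻¹ o

/-- The Hua map `h_x = τ · α_x · τ⁻¹ · α_{-(xτ⁻¹)} · τ · α_{-((-(xτ⁻¹))τ)}` of the
construction `M(U, τ)` (with right actions; as a left-action composite this is the
reversed product below), where `o = τ i` is the point `0`. -/
def huaOf (α : X → Equiv.Perm X) (τ : Equiv.Perm X) (o x : X) : Equiv.Perm X :=
  α (negOf α o (τ (negOf α o (τ⁻¹ x)))) * τ * α (negOf α o (τ⁻¹ x)) * τ⁻¹ * α x * τ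

theorem Equiv.Perm.apply_inv_self {α : Type*} (f : Equiv.Perm α) (x : α) : f (f⁻¹ x) = x :=
  Equiv.apply_symm_apply f x

theorem Equiv.Perm.inv_apply_self {α : Type*} (f : Equiv.Perm α) (x : α) : f⁻¹ (f x) = x :=
  Equiv.symm_apply_apply f x

namespace LocalMoufang

open Equiv

variable {X : Type*}

/-- conjugate of a subgroup of permutations -/
def cmap (g : Equiv.Perm X) (H : Subgroup (Equiv.Perm X)) : Subgroup (Equiv.Perm X) :=
  H.map (MulAut.conj g).toMonoidHom

lemma mem_cmap {g a : Perm X} {H : Subgroup (Perm X)} :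
    a ∈ cmap g H ↔ g⁻¹ * a * g ∈ H := by
  constructor
  · rintro ⟨h, hh, rfl⟩
    simpa [MulAut.conj_apply, mul_assoc] using hh
  · intro h
    exact ⟨g⁻¹ * a * g, h, by simp [MulAut.conj_apply]; group⟩

lemma mem_cmap_of {g a : Perm X} {H : Subgroup (Perm X)} (ha : a ∈ H) :
    g * a * g⁻¹ ∈ cmap g H := by
  rw [mem_cmap]; simpa [mul_assoc]

lemma cmap_cmap (g h : Perm X) (H : Subgroup (Perm X)) :
    cmap g (cmap h H) = cmap (g * h) H := by
  ext a; simp [mem_cmap, mul_assoc]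

lemma cmap_one (H : Subgroup (Perm X)) : cmap 1 H = H := by
  ext a; simp [mem_cmap]

lemma cmap_self {u : Perm X} {H : Subgroup (Perm X)} (hu : u ∈ H) : cmap u H = H := by
  ext a
  rw [mem_cmap]
  constructor
  · intro h
    have := H.mul_mem (H.mul_mem hu h) (H.inv_mem hu)
    simpa [mul_assoc] using this
  · intro h
    exact H.mul_mem (H.mul_mem (H.inv_mem hu) h) hu

lemma cmap_eq_iff {g : Perm X} {H K : Subgroup (Perm X)} :
    cmap g H = K ↔ H = cmap g⁻¹ K := by
  constructor
  · rintro rfl; rw [cmap_cmap]; simp [cmap_one]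
  · rintro rfl; rw [cmap_cmap]; simp [cmap_one]

lemma cmap_cancel (g : Perm X) (H : Subgroup (Perm X)) : cmap g (cmap g⁻¹ H) = H := by
  rw [cmap_cmap]; simp [cmap_one]

lemma prInv {r : Setoid X} {g : Perm X} (h : PreservesRel r g) :
    PreservesRel r g⁻¹ := by
  intro a b
  have := h (g⁻¹ a) (g⁻¹ b)
  simpa using this.symm

lemma prMul {r : Setoid X} {g h : Perm X} (hg : PreservesRel r g)
    (hh : PreservesRel r h) : PreservesRel r (g * h) := by
  intro a b
  exact (hh a b).trans (hg (h a) (h b))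

lemma prOne {r : Setoid X} : PreservesRel r (1 : Perm X) := by
  intro a b; simp

end LocalMoufang
namespace LocalMoufang

open Equiv

variable {X : Type*}

/-- Bundled data for the construction `M(U, τ)`. -/
structure MD (r : Setoid X) where
  U : Subgroup (Equiv.Perm X)
  τ : Equiv.Perm X
  i : X
  α : X → Equiv.Perm X
  big : ∃ a b c : X, ¬ r.r a b ∧ ¬ r.r a c ∧ ¬ r.r b c
  hU : ∀ g ∈ U, PreservesRel r g
  hτ : PreservesRel r τ
  ufix : ∀ g ∈ U, g i = i
  c1 : ∀ a b : X, ¬ r.r a i → ¬ r.r b i → ∃! g : Equiv.Perm X, g ∈ U ∧ g a = b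
  ct : ∀ a b : X, ¬ r.r a i → ¬ r.r b i → ∃ g ∈ U, r.r (g a) b
  cs : ∀ g ∈ U, ∀ h ∈ U, ∀ a : X, ¬ r.r a i → r.r (g a) (h a) →
      ∀ b : X, r.r (g b) (h b)
  c2 : ¬ r.r (τ i) i ∧ τ (τ i) = i
  hα : ∀ x : X, ¬ r.r x i → α x ∈ U ∧ α x (τ i) = x

namespace MD

variable {r : Setoid X} (D : MD r)

/-- the point `0` -/
def o : X := D.τ D.i

lemma o_ni : ¬ r.r D.o D.i := D.c2.1
lemma i_no : ¬ r.r D.i D.o := fun h => D.o_ni (r.iseqv.symm h)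
lemma τo : D.τ D.o = D.i := D.c2.2
lemma τinv_i : D.τ⁻¹ D.i = D.o := by
  rw [← D.τo]; simp
lemma τinv_o : D.τ⁻¹ D.o = D.i := by
  rw [o]; simp

lemma αU {x : X} (hx : ¬ r.r x D.i) : D.α x ∈ D.U := (D.hα x hx).1
lemma αo {x : X} (hx : ¬ r.r x D.i) : D.α x D.o = x := (D.hα x hx).2

lemma uPR {g : Perm X} (hg : g ∈ D.U) : PreservesRel r g := D.hU g hg

lemma u_rel_i {g : Perm X} (hg : g ∈ D.U) (a : X) : r.r (g a) D.i ↔ r.r a D.i := by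
  conv_lhs => rw [← D.ufix g hg]
  exact (D.uPR hg a D.i).symm

lemma τ_rel (a b : X) : r.r (D.τ a) (D.τ b) ↔ r.r a b := (D.hτ a b).symm
lemma τinv_rel (a b : X) : r.r (D.τ⁻¹ a) (D.τ⁻¹ b) ↔ r.r a b := ((prInv D.hτ) a b).symm

lemma τ_rel_i (a : X) : r.r (D.τ a) D.i ↔ r.r a D.o := by
  rw [← D.τo]; exact D.τ_rel a D.o
lemma τ_rel_o (a : X) : r.r (D.τ a) D.o ↔ r.r a D.i := by
  rw [o]; exact D.τ_rel a D.i
lemma τinv_rel_i (a : X) : r.r (D.τ⁻¹ a) D.i ↔ r.r a D.o := by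
  rw [← D.τinv_o]; exact D.τinv_rel a D.o
lemma τinv_rel_o (a : X) : r.r (D.τ⁻¹ a) D.o ↔ r.r a D.i := by
  rw [← D.τinv_i]; exact D.τinv_rel a D.i

/-- uniqueness in `U` -/
lemma u_eq {g h : Perm X} {a : X} (hg : g ∈ D.U) (hh : h ∈ D.U) (ha : ¬ r.r a D.i)
    (hab : g a = h a) : g = h := by
  obtain ⟨k, -, hk⟩ := D.c1 a (g a) ha (by rw [D.u_rel_i hg]; exact ha)
  rw [hk g ⟨hg, rfl⟩, hk h ⟨hh, hab.symm⟩]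

lemma g_eq_α {g : Perm X} (hg : g ∈ D.U) : g = D.α (g D.o) := by
  have h1 : ¬ r.r (g D.o) D.i := by rw [D.u_rel_i hg]; exact D.o_ni
  exact D.u_eq hg (D.αU h1) D.o_ni ((D.αo h1).symm)

lemma α_one : D.α D.o = 1 := by
  have := D.u_eq (D.αU D.o_ni) D.U.one_mem D.o_ni (by simp [D.αo D.o_ni])
  exact this

/-- `α (g y) = g * α y` for `g ∈ U`. -/
lemma α_apply {g : Perm X} {y : X} (hg : g ∈ D.U) (hy : ¬ r.r y D.i) :
    D.α (g y) = g * D.α y := by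
  have h1 : ¬ r.r (g y) D.i := by rw [D.u_rel_i hg]; exact hy
  refine D.u_eq (D.αU h1) (D.U.mul_mem hg (D.αU hy)) D.o_ni ?_
  simp [D.αo h1, D.αo hy]

/-- negation -/
def neg (x : X) : X := negOf D.α D.o x

lemma neg_def (x : X) : D.neg x = (D.α x)⁻¹ D.o := rfl

lemma neg_rel_o {x : X} (hx : ¬ r.r x D.i) : r.r (D.neg x) D.o ↔ r.r D.o x := by
  have h := (D.uPR (D.αU hx)) (D.neg x) D.o
  rw [h, neg_def]
  simp [D.αo hx]

lemma neg_ni {x : X} (hx : ¬ r.r x D.i) : ¬ r.r (D.neg x) D.i := by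
  rw [neg_def]
  have := D.u_rel_i (D.U.inv_mem (D.αU hx)) D.o
  rw [this]; exact D.o_ni

lemma α_neg {x : X} (hx : ¬ r.r x D.i) : D.α (D.neg x) = (D.α x)⁻¹ := by
  refine D.u_eq (D.αU (D.neg_ni hx)) (D.U.inv_mem (D.αU hx)) D.o_ni ?_
  rw [D.αo (D.neg_ni hx), neg_def]

lemma neg_neg {x : X} (hx : ¬ r.r x D.i) : D.neg (D.neg x) = x := by
  rw [neg_def, D.α_neg hx]
  simp only [inv_inv]
  exact D.αo hx

/-- the opposite root group `U₀ = U^τ` -/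
def U₀ : Subgroup (Perm X) := cmap D.τ D.U

lemma mem_U₀ {q : Perm X} : q ∈ D.U₀ ↔ D.τ⁻¹ * q * D.τ ∈ D.U := mem_cmap

lemma q_o {q : Perm X} (hq : q ∈ D.U₀) : q D.o = D.o := by
  have h := D.ufix _ (D.mem_U₀.1 hq)
  have : D.τ ((D.τ⁻¹ * q * D.τ) D.i) = D.τ D.i := by rw [h]
  simpa [o, Perm.mul_apply] using this

lemma qPR {q : Perm X} (hq : q ∈ D.U₀) : PreservesRel r q := by
  have h := D.uPR (D.mem_U₀.1 hq)
  have : q = D.τ * (D.τ⁻¹ * q * D.τ) * D.τ⁻¹ := by group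
  rw [this]
  exact prMul (prMul D.hτ h) (prInv D.hτ)

lemma q_rel_o {q : Perm X} (hq : q ∈ D.U₀) (a : X) : r.r (q a) D.o ↔ r.r a D.o := by
  conv_lhs => rw [← D.q_o hq]
  exact (D.qPR hq a D.o).symm

lemma q_eq {q q' : Perm X} {a : X} (hq : q ∈ D.U₀) (hq' : q' ∈ D.U₀) (ha : ¬ r.r a D.o)
    (hab : q a = q' a) : q = q' := by
  have h1 : ¬ r.r (D.τ⁻¹ a) D.i := by rw [D.τinv_rel_i]; exact ha
  have h2 : (D.τ⁻¹ * q * D.τ) (D.τ⁻¹ a) = (D.τ⁻¹ * q' * D.τ) (D.τ⁻¹ a) := by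
    simp [Perm.mul_apply, hab]
  have := D.u_eq (D.mem_U₀.1 hq) (D.mem_U₀.1 hq') h1 h2
  have h3 : D.τ * (D.τ⁻¹ * q * D.τ) * D.τ⁻¹ = D.τ * (D.τ⁻¹ * q' * D.τ) * D.τ⁻¹ := by rw [this]
  simpa [mul_assoc] using h3

/-- the `γ` maps -/
def γ (y : X) : Perm X := D.τ * D.α y * D.τ⁻¹

lemma γU₀ {y : X} (hy : ¬ r.r y D.i) : D.γ y ∈ D.U₀ := by
  rw [mem_U₀]
  have : D.τ⁻¹ * D.γ y * D.τ = D.α y := by rw [γ]; group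
  rw [this]; exact D.αU hy

lemma γ_i {y : X} (hy : ¬ r.r y D.i) : D.γ y D.i = D.τ y := by
  simp [γ, Perm.mul_apply, D.τinv_i, D.αo hy]

lemma γ_mul {y z : X} (hy : ¬ r.r y D.i) (hz : ¬ r.r z D.i) :
    D.γ y * D.γ z = D.γ (D.α y z) := by
  rw [γ, γ, γ, D.α_apply (D.αU hy) hz]
  group

lemma γ_inv {y : X} (hy : ¬ r.r y D.i) : (D.γ y)⁻¹ = D.γ (D.neg y) := by
  rw [γ, γ, D.α_neg hy]
  group

/-- `q * γ y = γ (τ⁻¹ (q (τ y)))` for `q ∈ U₀` -/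
lemma q_γ {q : Perm X} {y : X} (hq : q ∈ D.U₀) (hy : ¬ r.r y D.i) :
    q * D.γ y = D.γ (D.τ⁻¹ (q (D.τ y))) := by
  have hτy : ¬ r.r (D.τ y) D.o := by rw [D.τ_rel_o]; exact hy
  have hqτy : ¬ r.r (q (D.τ y)) D.o := by rw [D.q_rel_o hq]; exact hτy
  have hidx : ¬ r.r (D.τ⁻¹ (q (D.τ y))) D.i := by rw [D.τinv_rel_i]; exact hqτy
  refine D.q_eq (D.U₀.mul_mem hq (D.γU₀ hy)) (D.γU₀ hidx) D.i_no ?_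
  rw [Perm.mul_apply, D.γ_i hy, D.γ_i hidx]
  simp

/-- class triviality -/
lemma class_trivial {g : Perm X} (hg : g ∈ D.U) (h : r.r (g D.o) D.o) (a : X) :
    r.r (g a) a := by
  have := D.cs g hg 1 D.U.one_mem D.o D.o_ni (by simpa using h) a
  simpa using this

lemma α_pair {x y : X} (hx : ¬ r.r x D.i) (hy : ¬ r.r y D.i) (hxy : r.r x y) (a : X) :
    r.r (D.α x a) (D.α y a) :=
  D.cs _ (D.αU hx) _ (D.αU hy) D.o D.o_ni (by rw [D.αo hx, D.αo hy]; exact hxy) a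

end MD
end LocalMoufang
namespace LocalMoufang
namespace MD

open Equiv

variable {X : Type*} {r : Setoid X} (D : MD r)

/-- the constructed family of root groups -/
noncomputable def Fam : X → Subgroup (Perm X) := constructedU r D.U D.τ D.α D.i

lemma Fam_rel {x : X} (hx : r.r x D.i) : D.Fam x = cmap (D.γ (D.τ⁻¹ x)) D.U := by
  rw [Fam, constructedU]
  rw [if_pos hx]
  rfl

lemma Fam_nrel {x : X} (hx : ¬ r.r x D.i) : D.Fam x = cmap (D.α x * D.τ) D.U := by
  rw [Fam, constructedU]
  rw [if_neg hx]
  rfl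

lemma γ_o : D.γ D.o = 1 := by
  rw [γ, D.α_one]; group

lemma Fam_i : D.Fam D.i = D.U := by
  rw [D.Fam_rel (r.iseqv.refl _), D.τinv_i, D.γ_o, cmap_one]

lemma Fam_o : D.Fam D.o = D.U₀ := by
  rw [D.Fam_nrel D.o_ni, D.α_one, one_mul]
  rfl

lemma Fam_nrel' {x : X} (hx : ¬ r.r x D.i) : D.Fam x = cmap (D.α x) D.U₀ := by
  rw [D.Fam_nrel hx, U₀, cmap_cmap]

/-- conjugating the family by elements of `U`, at points not equivalent to `i` -/
lemma u_Fam {g : Perm X} {x : X} (hg : g ∈ D.U) (hx : ¬ r.r x D.i) :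
    cmap g (D.Fam x) = D.Fam (g x) := by
  have hgx : ¬ r.r (g x) D.i := by rw [D.u_rel_i hg]; exact hx
  rw [D.Fam_nrel' hx, cmap_cmap, ← D.α_apply hg hx, ← D.Fam_nrel' hgx]

/-- The Hua condition. -/
def HuaC : Prop :=
  ∀ x : X, ¬ r.r x D.o → ¬ r.r x D.i → cmap (huaOf D.α D.τ D.o x) D.U = D.U

/-- the `μ`-maps -/
def mm (x : X) : Perm X :=
  D.α (D.neg (D.τ (D.neg (D.τ⁻¹ x)))) * D.γ (D.neg (D.τ⁻¹ x)) * D.α x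

lemma hua_eq_mm (x : X) : huaOf D.α D.τ D.o x = D.mm x * D.τ := by
  simp only [huaOf, mm, γ, neg]
  group

lemma α_inv_self {x : X} (hx : ¬ r.r x D.i) : (D.α x)⁻¹ x = D.o := by
  rw [Perm.inv_def, Equiv.symm_apply_eq]
  exact (D.αo hx).symm

section Units

variable {x : X} (hxo : ¬ r.r x D.o) (hxi : ¬ r.r x D.i)

include hxo hxi

omit hxi in
lemma τinv_u_i : ¬ r.r (D.τ⁻¹ x) D.i := by rw [D.τinv_rel_i]; exact hxo
omit hxo in
lemma τinv_u_o : ¬ r.r (D.τ⁻¹ x) D.o := by rw [D.τinv_rel_o]; exact hxi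
omit hxi in
lemma b_ni : ¬ r.r (D.neg (D.τ⁻¹ x)) D.i := D.neg_ni (D.τinv_u_i hxo)
lemma b_no : ¬ r.r (D.neg (D.τ⁻¹ x)) D.o := by
  rw [D.neg_rel_o (D.τinv_u_i hxo)]
  intro h
  exact (D.τinv_u_o hxi) (r.iseqv.symm h)
lemma τb_ni : ¬ r.r (D.τ (D.neg (D.τ⁻¹ x))) D.i := by
  rw [D.τ_rel_i]; exact D.b_no hxo hxi
omit hxi in
lemma τb_no : ¬ r.r (D.τ (D.neg (D.τ⁻¹ x))) D.o := by
  rw [D.τ_rel_o]; exact D.b_ni hxo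
lemma c_ni : ¬ r.r (D.neg (D.τ (D.neg (D.τ⁻¹ x)))) D.i := D.neg_ni (D.τb_ni hxo hxi)
lemma c_no : ¬ r.r (D.neg (D.τ (D.neg (D.τ⁻¹ x)))) D.o := by
  rw [D.neg_rel_o (D.τb_ni hxo hxi)]
  intro h
  exact (D.τb_no hxo) (r.iseqv.symm h)

lemma mmPR : PreservesRel r (D.mm x) :=
  prMul (prMul (D.uPR (D.αU (D.c_ni hxo hxi))) (D.qPR (D.γU₀ (D.b_ni hxo))))
    (D.uPR (D.αU hxi))

lemma mm_o : D.mm x D.o = D.i := by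
  have h1 := D.α_inv_self (D.τinv_u_i hxo)
  have h2 : D.γ (D.neg (D.τ⁻¹ x)) x = D.i := by
    rw [γ, D.α_neg (D.τinv_u_i hxo)]
    simp only [Perm.mul_apply]
    rw [h1, D.τo]
  rw [mm]
  simp only [Perm.mul_apply]
  rw [D.αo hxi, h2, D.ufix _ (D.αU (D.c_ni hxo hxi))]

lemma mm_i : D.mm x D.i = D.o := by
  have h1 : D.α (D.neg (D.τ (D.neg (D.τ⁻¹ x)))) (D.τ (D.neg (D.τ⁻¹ x))) = D.o := by
    rw [D.α_neg (D.τb_ni hxo hxi)]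
    exact D.α_inv_self (D.τb_ni hxo hxi)
  rw [mm]
  simp only [Perm.mul_apply]
  rw [D.ufix _ (D.αU hxi), D.γ_i (D.b_ni hxo), h1]

lemma mm_inv : (D.mm x)⁻¹ = D.mm (D.τ (D.neg (D.τ⁻¹ x))) := by
  have hτx := D.τinv_u_i hxo
  have hb := D.b_ni hxo
  have hτb := D.τb_ni hxo hxi
  have e1 : D.τ⁻¹ (D.τ (D.neg (D.τ⁻¹ x))) = D.neg (D.τ⁻¹ x) := Perm.inv_apply_self _ _
  have e2 : D.τ (D.τ⁻¹ x) = x := Perm.apply_inv_self _ _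
  rw [mm, mm, e1, mul_inv_rev, mul_inv_rev, ← D.α_neg hxi, D.γ_inv hb,
    ← D.α_neg (D.c_ni hxo hxi), D.neg_neg hτb, D.neg_neg hτx, e2]
  group

end Units

/-- `k`-relation: `γ(τ⁻¹ x)⁻¹ · (α x · τ)` normalizes `U`, for units `x`. -/
lemma k_mem (hua : D.HuaC) {x : X} (hxo : ¬ r.r x D.o) (hxi : ¬ r.r x D.i) :
    cmap ((D.γ (D.τ⁻¹ x))⁻¹ * (D.α x * D.τ)) D.U = D.U := by
  have hc := D.c_ni hxo hxi
  have h1 : (D.α (D.neg (D.τ (D.neg (D.τ⁻¹ x)))))⁻¹ * huaOf D.α D.τ D.o x =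
      (D.γ (D.τ⁻¹ x))⁻¹ * (D.α x * D.τ) := by
    rw [D.hua_eq_mm, mm, D.γ_inv (D.τinv_u_i hxo)]
    group
  rw [← h1, ← cmap_cmap, hua x hxo hxi, cmap_self (D.U.inv_mem (D.αU hc))]

lemma Fam_unit (hua : D.HuaC) {x : X} (hxo : ¬ r.r x D.o) (hxi : ¬ r.r x D.i) :
    D.Fam x = cmap (D.γ (D.τ⁻¹ x)) D.U := by
  rw [D.Fam_nrel hxi]
  conv_rhs => rw [← D.k_mem hua hxo hxi]
  rw [cmap_cmap]
  congr 1
  group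

lemma Fam_no (hua : D.HuaC) {x : X} (hx : ¬ r.r x D.o) :
    D.Fam x = cmap (D.γ (D.τ⁻¹ x)) D.U := by
  by_cases hxi : r.r x D.i
  · exact D.Fam_rel hxi
  · exact D.Fam_unit hua hx hxi

/-- conjugating the family by elements of `U₀`, at points not equivalent to `o` -/
lemma q_Fam (hua : D.HuaC) {q : Perm X} {x : X} (hq : q ∈ D.U₀) (hx : ¬ r.r x D.o) :
    cmap q (D.Fam x) = D.Fam (q x) := by
  have hτx : ¬ r.r (D.τ⁻¹ x) D.i := by rw [D.τinv_rel_i]; exact hx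
  have hqx : ¬ r.r (q x) D.o := by rw [D.q_rel_o hq]; exact hx
  rw [D.Fam_no hua hx, cmap_cmap, D.q_γ hq hτx, D.Fam_no hua hqx]
  congr 2
  simp

/-- L1 facts about the `μ`-maps -/
lemma mm_U₀ (hua : D.HuaC) {x : X} (hxo : ¬ r.r x D.o) (hxi : ¬ r.r x D.i) :
    cmap (D.mm x) D.U₀ = D.U := by
  have h := hua x hxo hxi
  rw [D.hua_eq_mm, ← cmap_cmap] at h
  exact h

lemma mm_U (hua : D.HuaC) {x : X} (hxo : ¬ r.r x D.o) (hxi : ¬ r.r x D.i) :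
    cmap (D.mm x) D.U = D.U₀ := by
  have h := D.mm_U₀ hua (D.τb_no hxo) (D.τb_ni hxo hxi)
  rw [← D.mm_inv hxo hxi] at h
  rw [cmap_eq_iff] at h
  exact h.symm

lemma exists_unit : ∃ e : X, ¬ r.r e D.o ∧ ¬ r.r e D.i := by
  obtain ⟨a, b, c, hab, hac, hbc⟩ := D.big
  have key : ∀ u v w : X, ¬ r.r u v → r.r u w → r.r v w → False := fun u v w h1 h2 h3 =>
    h1 (r.iseqv.trans h2 (r.iseqv.symm h3))
  by_cases ha1 : r.r a D.i
  · by_cases hb1 : r.r b D.o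
    · exact ⟨c, fun h => key b c D.o hbc hb1 h, fun h => key a c D.i hac ha1 h⟩
    · exact ⟨b, hb1, fun h => key a b D.i hab ha1 h⟩
  · by_cases ha2 : r.r a D.o
    · by_cases hb1 : r.r b D.i
      · exact ⟨c, fun h => key a c D.o hac ha2 h, fun h => key b c D.i hbc hb1 h⟩
      · exact ⟨b, fun h => key a b D.o hab ha2 h, hb1⟩
    · exact ⟨a, ha2, ha1⟩

end MD
end LocalMoufang
namespace LocalMoufang
namespace MD

open Equiv

variable {X : Type*} {r : Setoid X} (D : MD r)

section Mu

set_option linter.unusedSectionVars false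

variable (hua : D.HuaC) {e : X} (heo : ¬ r.r e D.o) (hei : ¬ r.r e D.i)

include hua heo hei

lemma mm_inv_i : (D.mm e)⁻¹ D.i = D.o := by
  rw [← D.mm_o heo hei, Perm.inv_apply_self]

lemma mm_inv_o : (D.mm e)⁻¹ D.o = D.i := by
  rw [← D.mm_i heo hei, Perm.inv_apply_self]

lemma mm_rel_o (a : X) : r.r (D.mm e a) D.o ↔ r.r a D.i := by
  conv_lhs => rw [← D.mm_i heo hei]
  exact (D.mmPR heo hei a D.i).symm

lemma mm_rel_i (a : X) : r.r (D.mm e a) D.i ↔ r.r a D.o := by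
  conv_lhs => rw [← D.mm_o heo hei]
  exact (D.mmPR heo hei a D.o).symm

/-- conjugation by a `μ`-map turns `α`'s into `γ`'s -/
lemma mm_α_mm {y : X} (hy : ¬ r.r y D.i) :
    D.mm e * D.α y * (D.mm e)⁻¹ = D.γ (D.τ⁻¹ (D.mm e y)) := by
  have hclass : ¬ r.r (D.mm e y) D.o := by rw [D.mm_rel_o hua heo hei]; exact hy
  have hidx : ¬ r.r (D.τ⁻¹ (D.mm e y)) D.i := by rw [D.τinv_rel_i]; exact hclass
  have mem1 : D.mm e * D.α y * (D.mm e)⁻¹ ∈ D.U₀ := by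
    rw [← D.mm_U hua heo hei]
    exact mem_cmap_of (D.αU hy)
  refine D.q_eq mem1 (D.γU₀ hidx) D.i_no ?_
  simp only [Perm.mul_apply]
  rw [D.mm_inv_i hua heo hei, D.αo hy, D.γ_i hidx, Perm.apply_inv_self]

/-- the same data with `τ` replaced by the `μ`-map `mm e` -/
noncomputable def hat : MD r where
  U := D.U
  τ := D.mm e
  i := D.i
  α := D.α
  big := D.big
  hU := D.hU
  hτ := D.mmPR heo hei
  ufix := D.ufix
  c1 := D.c1
  ct := D.ct
  cs := D.cs
  c2 := by
    constructor
    · rw [D.mm_i heo hei]; exact D.o_ni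
    · rw [D.mm_i heo hei, D.mm_o heo hei]
  hα := fun x hx => ⟨(D.hα x hx).1, by rw [D.mm_i heo hei]; exact (D.hα x hx).2⟩

lemma hat_o : (D.hat heo hei).o = D.o := D.mm_i heo hei

lemma hat_neg : (D.hat heo hei).neg = D.neg := by
  funext y
  show ((D.hat heo hei).α y)⁻¹ (D.hat heo hei).o = (D.α y)⁻¹ D.o
  rw [D.hat_o hua heo hei]
  rfl

lemma hat_U₀ : (D.hat heo hei).U₀ = D.U₀ := D.mm_U hua heo hei

lemma hat_γ {y : X} (hy : ¬ r.r y D.i) :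
    (D.hat heo hei).γ y = D.γ (D.τ⁻¹ (D.mm e y)) := D.mm_α_mm hua heo hei hy

lemma hat_Fam : (D.hat heo hei).Fam = D.Fam := by
  funext x
  by_cases hx : r.r x D.i
  · rw [(D.hat heo hei).Fam_rel hx, D.Fam_rel hx]
    have hy : ¬ r.r ((D.mm e)⁻¹ x) D.i := by
      intro h
      have h2 : r.r (D.mm e ((D.mm e)⁻¹ x)) (D.mm e D.i) := (D.mmPR heo hei _ _).1 h
      rw [Perm.apply_inv_self, D.mm_i heo hei] at h2
      exact D.o_ni (r.iseqv.trans (r.iseqv.symm h2) hx)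
    have : (D.hat heo hei).γ ((D.hat heo hei).τ⁻¹ x) = D.γ (D.τ⁻¹ x) := by
      rw [show (D.hat heo hei).τ⁻¹ x = (D.mm e)⁻¹ x from rfl,
        D.hat_γ hua heo hei hy, Perm.apply_inv_self]
    rw [this]
    rfl
  · rw [(D.hat heo hei).Fam_nrel hx, D.Fam_nrel' hx,
      show (D.hat heo hei).α x * (D.hat heo hei).τ = D.α x * D.mm e from rfl,
      ← cmap_cmap, show (D.hat heo hei).U = D.U from rfl, D.mm_U hua heo hei]

lemma hat_J1 : cmap (D.hat heo hei).τ⁻¹ (D.hat heo hei).U = (D.hat heo hei).U₀ := by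
  rw [D.hat_U₀ hua heo hei]
  show cmap (D.mm e)⁻¹ D.U = D.U₀
  have h := D.mm_U₀ hua heo hei
  rw [cmap_eq_iff] at h
  exact h.symm

lemma hat_HuaC : (D.hat heo hei).HuaC := by
  intro x hxo' hxi'
  set E := D.hat heo hei with hE
  have hxo : ¬ r.r x D.o := by rw [← D.hat_o hua heo hei]; exact hxo'
  -- decompose the hat Hua map
  rw [E.hua_eq_mm, ← cmap_cmap]
  have h1 : cmap E.τ E.U = D.U₀ := D.mm_U hua heo hei
  rw [show cmap E.τ E.U = D.U₀ from h1]
  rw [mm, show E.α = D.α from rfl]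
  rw [← cmap_cmap, ← cmap_cmap]
  -- innermost : conjugate U₀ by α x
  have s1 : cmap (D.α x) D.U₀ = D.Fam x := (D.Fam_nrel' hxi').symm
  rw [s1]
  -- middle : conjugate by the hat γ at b̂
  have hbni : ¬ r.r (E.neg (E.τ⁻¹ x)) E.i := E.b_ni hxo'
  have hγmem : E.γ (E.neg (E.τ⁻¹ x)) ∈ D.U₀ := by
    rw [← D.hat_U₀ hua heo hei]
    exact E.γU₀ hbni
  have hpt : E.γ (E.neg (E.τ⁻¹ x)) x = D.i := by
    rw [γ, E.α_neg (E.τinv_u_i hxo')]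
    simp only [Perm.mul_apply]
    rw [E.α_inv_self (E.τinv_u_i hxo')]
    exact E.τo
  have s2 : cmap (E.γ (E.neg (E.τ⁻¹ x))) (D.Fam x) = D.U := by
    rw [D.q_Fam hua hγmem hxo, hpt, D.Fam_i]
  rw [s2]
  -- outermost : conjugate U by α ĉ
  have hcni : ¬ r.r (E.neg (E.τ (E.neg (E.τ⁻¹ x)))) E.i := E.c_ni hxo' hxi'
  exact cmap_self (D.αU hcni)

end Mu

end MD
end LocalMoufang
namespace LocalMoufang
namespace MD

open Equiv

variable {X : Type*} {r : Setoid X} (D : MD r)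

/-- class of the image of a point of the class of `i` under a `γ`-map -/
lemma γ_class {z w : X} (hz : ¬ r.r z D.i) (hw : r.r w D.i) :
    r.r (D.γ z w) (D.τ z) := by
  have h1 : r.r (D.τ⁻¹ w) D.o := (D.τinv_rel_o w).2 hw
  have h2 : r.r (D.α z (D.τ⁻¹ w)) z := by
    have := (D.uPR (D.αU hz) (D.τ⁻¹ w) D.o).1 h1
    rwa [D.αo hz] at this
  have h3 := (D.τ_rel _ _).2 h2
  simpa [γ, Perm.mul_apply] using h3

/-- conjugating the family by an element normalizing `U` and `U₀` and fixing `i`, `o` -/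
lemma hfix_Fam (hua : D.HuaC) {h : Perm X} (h1 : cmap h D.U = D.U)
    (h2 : cmap h D.U₀ = D.U₀) (hi : h D.i = D.i) (ho : h D.o = D.o) (s : X) :
    cmap h (D.Fam s) = D.Fam (h s) := by
  have hinv_o : h⁻¹ D.o = D.o := by
    rw [Perm.inv_def, Equiv.symm_apply_eq]; exact ho.symm
  have hinv_i : h⁻¹ D.i = D.i := by
    rw [Perm.inv_def, Equiv.symm_apply_eq]; exact hi.symm
  by_cases hs : r.r s D.i
  · have hτs : ¬ r.r (D.τ⁻¹ s) D.i := by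
      rw [D.τinv_rel_i]
      intro hcon
      exact D.o_ni (r.iseqv.trans (r.iseqv.symm hcon) hs)
    have hq : h * D.γ (D.τ⁻¹ s) * h⁻¹ ∈ D.U₀ := by
      rw [← h2]; exact mem_cmap_of (D.γU₀ hτs)
    rw [D.Fam_rel hs, cmap_cmap,
      show h * D.γ (D.τ⁻¹ s) = (h * D.γ (D.τ⁻¹ s) * h⁻¹) * h from by group,
      ← cmap_cmap, h1, ← D.Fam_i, D.q_Fam hua hq D.i_no]
    congr 1
    simp only [Perm.mul_apply]
    rw [hinv_i, D.γ_i hτs, Perm.apply_inv_self]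
  · have hu : h * D.α s * h⁻¹ ∈ D.U := by
      rw [← h1]; exact mem_cmap_of (D.αU hs)
    rw [D.Fam_nrel' hs, cmap_cmap,
      show h * D.α s = (h * D.α s * h⁻¹) * h from by group,
      ← cmap_cmap, h2, ← D.Fam_o, D.u_Fam hu D.o_ni]
    congr 1
    simp only [Perm.mul_apply]
    rw [hinv_o, D.αo hs]

/-- hard case, unit `y` -/
lemma core_unit (hua : D.HuaC) (J1 : cmap D.τ⁻¹ D.U = D.U₀) {y x : X}
    (hyo : ¬ r.r y D.o) (hyi : ¬ r.r y D.i) (hx : r.r x D.i) :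
    cmap (D.α y) (D.Fam x) = D.Fam (D.α y x) := by
  have hτy : ¬ r.r (D.τ⁻¹ y) D.i := D.τinv_u_i hyo
  have hxo : ¬ r.r x D.o := fun hcon => D.o_ni (r.iseqv.trans (r.iseqv.symm hcon) hx)
  have hc_i : ¬ r.r (D.τ⁻¹ x) D.i := by rw [D.τinv_rel_i]; exact hxo
  have hc_o : r.r (D.τ⁻¹ x) D.o := (D.τinv_rel_o x).2 hx
  set ky := (D.γ (D.τ⁻¹ y))⁻¹ * (D.α y * D.τ) with hky
  have hk : cmap ky D.U = D.U := D.k_mem hua hyo hyi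
  set u₁ := ky * D.α (D.τ⁻¹ x) * ky⁻¹ with hu₁
  have hu₁U : u₁ ∈ D.U := by rw [← hk]; exact mem_cmap_of (D.αU hc_i)
  have hdec : D.α y * D.γ (D.τ⁻¹ x) = D.γ (D.τ⁻¹ y) * (u₁ * (ky * D.τ⁻¹)) := by
    rw [hu₁, hky, γ, γ]; group
  have e1 : cmap D.τ D.U₀ = D.U := by
    rw [← J1, cmap_cmap, show D.τ * D.τ⁻¹ = 1 from by group, cmap_one]
  -- step 1 : conjugating U₀ = Fam o by ky
  have s1 : cmap ky (D.U₀) = D.Fam (D.τ (D.neg (D.τ⁻¹ y))) := by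
    rw [hky, ← cmap_cmap, ← cmap_cmap, e1, cmap_self (D.αU hyi), D.γ_inv hτy, ← D.Fam_i,
      D.q_Fam hua (D.γU₀ (D.neg_ni hτy)) D.i_no, D.γ_i (D.neg_ni hτy)]
  have hζo : ¬ r.r (D.τ (D.neg (D.τ⁻¹ y))) D.o := D.τb_no hyo
  have hζi : ¬ r.r (D.τ (D.neg (D.τ⁻¹ y))) D.i := D.τb_ni hyo hyi
  -- step 2 : conjugating by u₁
  have s2 : cmap u₁ (D.Fam (D.τ (D.neg (D.τ⁻¹ y)))) = D.Fam (u₁ (D.τ (D.neg (D.τ⁻¹ y)))) :=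
    D.u_Fam hu₁U hζi
  have hkyo : ky D.o = D.τ (D.neg (D.τ⁻¹ y)) := by
    rw [hky]
    simp only [Perm.mul_apply]
    rw [D.τo, D.ufix _ (D.αU hyi), D.γ_inv hτy, D.γ_i (D.neg_ni hτy)]
  have hkinv : ky⁻¹ (D.τ (D.neg (D.τ⁻¹ y))) = D.o := by
    rw [← hkyo, Perm.inv_apply_self]
  have hu₁ζ : u₁ (D.τ (D.neg (D.τ⁻¹ y))) = ky (D.τ⁻¹ x) := by
    rw [hu₁]
    simp only [Perm.mul_apply]
    rw [hkinv, D.αo hc_i]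
  -- the class of ky (τ⁻¹ x)
  have hrel : r.r (ky (D.τ⁻¹ x)) (D.τ (D.neg (D.τ⁻¹ y))) := by
    rw [hky]
    simp only [Perm.mul_apply]
    have h1 : r.r (D.τ (D.τ⁻¹ x)) D.i := (D.τ_rel_i _).2 hc_o
    have h2 : r.r (D.α y (D.τ (D.τ⁻¹ x))) D.i := (D.u_rel_i (D.αU hyi) _).2 h1
    have h3 := D.γ_class (D.neg_ni hτy) h2
    rw [D.γ_inv hτy]
    exact h3
  have hu₁ζo : ¬ r.r (u₁ (D.τ (D.neg (D.τ⁻¹ y)))) D.o := by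
    rw [hu₁ζ]
    intro hcon
    exact hζo (r.iseqv.trans (r.iseqv.symm hrel) hcon)
  -- step 3
  have s3 : cmap (D.γ (D.τ⁻¹ y)) (D.Fam (u₁ (D.τ (D.neg (D.τ⁻¹ y))))) =
      D.Fam (D.γ (D.τ⁻¹ y) (u₁ (D.τ (D.neg (D.τ⁻¹ y))))) :=
    D.q_Fam hua (D.γU₀ hτy) hu₁ζo
  -- the final point
  have hpt : D.γ (D.τ⁻¹ y) (u₁ (D.τ (D.neg (D.τ⁻¹ y)))) = D.α y x := by
    rw [hu₁ζ, show D.γ (D.τ⁻¹ y) (ky (D.τ⁻¹ x)) = (D.γ (D.τ⁻¹ y) * ky) (D.τ⁻¹ x) from rfl,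
      show D.γ (D.τ⁻¹ y) * ky = D.α y * D.τ from by rw [hky]; group]
    simp only [Perm.mul_apply]
    rw [Perm.apply_inv_self]
  calc cmap (D.α y) (D.Fam x)
      = cmap (D.γ (D.τ⁻¹ y)) (cmap u₁ (cmap ky (cmap D.τ⁻¹ D.U))) := by
        rw [D.Fam_rel hx, cmap_cmap, cmap_cmap, cmap_cmap, cmap_cmap]
        congr 1
        try exact hdec
    _ = D.Fam (D.α y x) := by
        rw [J1, s1, s2, s3, hpt]

/-- hard case, `y ∼ o` -/
lemma core_o (hua : D.HuaC) {y x : X} (hyo : r.r y D.o) (hyi : ¬ r.r y D.i)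
    (hx : r.r x D.i) : cmap (D.α y) (D.Fam x) = D.Fam (D.α y x) := by
  have hxo : ¬ r.r x D.o := fun hcon => D.o_ni (r.iseqv.trans (r.iseqv.symm hcon) hx)
  obtain ⟨p', hp'o, hp'i⟩ := D.exists_unit
  obtain ⟨u₀, ⟨hu₀U, hu₀v⟩, -⟩ := D.c1 (D.neg p') y (D.neg_ni hp'i) hyi
  have hpi : ¬ r.r (u₀ D.o) D.i := by rw [D.u_rel_i hu₀U]; exact D.o_ni
  have hpo : ¬ r.r (u₀ D.o) D.o := by
    intro hcon
    have h1 : r.r (u₀ (D.neg p')) (u₀ D.o) := by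
      rw [hu₀v]
      exact r.iseqv.trans hyo (r.iseqv.symm hcon)
    have h2 : r.r (D.neg p') D.o := (D.uPR hu₀U _ _).2 h1
    rw [D.neg_rel_o hp'i] at h2
    exact hp'o (r.iseqv.symm h2)
  set p := u₀ D.o with hpdef
  have hαp : D.α p = u₀ := (D.g_eq_α hu₀U).symm
  have hαy : D.α y = D.α p * (D.α p')⁻¹ := by
    rw [hαp, ← D.α_neg hp'i, ← hu₀v, D.α_apply hu₀U (D.neg_ni hp'i)]
  set M := D.mm p * (D.mm p')⁻¹ with hM
  have hMU : cmap M D.U = D.U := by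
    rw [hM, ← cmap_cmap]
    have h1 : cmap (D.mm p')⁻¹ D.U = D.U₀ := by
      have h := D.mm_U₀ hua hp'o hp'i; rw [cmap_eq_iff] at h; exact h.symm
    rw [h1, D.mm_U₀ hua hpo hpi]
  have hMU₀ : cmap M D.U₀ = D.U₀ := by
    rw [hM, ← cmap_cmap]
    have h1 : cmap (D.mm p')⁻¹ D.U₀ = D.U := by
      have h := D.mm_U hua hp'o hp'i; rw [cmap_eq_iff] at h; exact h.symm
    rw [h1, D.mm_U hua hpo hpi]
  have hMi : M D.i = D.i := by
    rw [hM]; simp only [Perm.mul_apply]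
    rw [D.mm_inv_i hua hp'o hp'i, D.mm_o hpo hpi]
  have hMo : M D.o = D.o := by
    rw [hM]; simp only [Perm.mul_apply]
    rw [D.mm_inv_o hua hp'o hp'i, D.mm_i hpo hpi]
  have hMPR : PreservesRel r M := prMul (D.mmPR hpo hpi) (prInv (D.mmPR hp'o hp'i))
  have hn : D.γ (D.neg (D.τ⁻¹ p)) * D.α y * (D.γ (D.neg (D.τ⁻¹ p')))⁻¹
      = (D.α (D.neg (D.τ (D.neg (D.τ⁻¹ p)))))⁻¹ * M * D.α (D.neg (D.τ (D.neg (D.τ⁻¹ p')))) := by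
    rw [hαy, hM, mm, mm]; group
  -- chain
  have hbp'U₀ : D.γ (D.neg (D.τ⁻¹ p')) ∈ D.U₀ := D.γU₀ (D.b_ni hp'o)
  have s1 : cmap (D.γ (D.neg (D.τ⁻¹ p'))) (D.Fam x) =
      D.Fam (D.γ (D.neg (D.τ⁻¹ p')) x) := D.q_Fam hua hbp'U₀ hxo
  have hpt1 : r.r (D.γ (D.neg (D.τ⁻¹ p')) x) (D.τ (D.neg (D.τ⁻¹ p'))) :=
    D.γ_class (D.b_ni hp'o) hx
  have hpt1i : ¬ r.r (D.γ (D.neg (D.τ⁻¹ p')) x) D.i := fun hcon =>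
    (D.τb_ni hp'o hp'i) (r.iseqv.trans (r.iseqv.symm hpt1) hcon)
  have s2 : cmap (D.α (D.neg (D.τ (D.neg (D.τ⁻¹ p'))))) (D.Fam (D.γ (D.neg (D.τ⁻¹ p')) x)) =
      D.Fam (D.α (D.neg (D.τ (D.neg (D.τ⁻¹ p')))) (D.γ (D.neg (D.τ⁻¹ p')) x)) :=
    D.u_Fam (D.αU (D.c_ni hp'o hp'i)) hpt1i
  set pt2 := D.α (D.neg (D.τ (D.neg (D.τ⁻¹ p')))) (D.γ (D.neg (D.τ⁻¹ p')) x) with hpt2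
  have s3 : cmap M (D.Fam pt2) = D.Fam (M pt2) := D.hfix_Fam hua hMU hMU₀ hMi hMo pt2
  have hpt2i : ¬ r.r pt2 D.i := by
    rw [hpt2, D.u_rel_i (D.αU (D.c_ni hp'o hp'i))]
    exact hpt1i
  have hpt3i : ¬ r.r (M pt2) D.i := by
    intro hcon
    rw [← hMi] at hcon
    exact hpt2i ((hMPR pt2 D.i).2 hcon)
  have s4 : cmap (D.α (D.neg (D.τ (D.neg (D.τ⁻¹ p)))))⁻¹ (D.Fam (M pt2)) =
      D.Fam ((D.α (D.neg (D.τ (D.neg (D.τ⁻¹ p)))))⁻¹ (M pt2)) :=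
    D.u_Fam (D.U.inv_mem (D.αU (D.c_ni hpo hpi))) hpt3i
  -- identify the point after step 4 as γ (neg (τ⁻¹ p)) (α y x)
  have hαyx : r.r (D.α y x) D.i := by
    have h1 : r.r (D.α y D.o) D.o := by rw [D.αo hyi]; exact hyo
    exact r.iseqv.trans (D.class_trivial (D.αU hyi) h1 x) hx
  have hpt4 : (D.α (D.neg (D.τ (D.neg (D.τ⁻¹ p)))))⁻¹ (M pt2) =
      D.γ (D.neg (D.τ⁻¹ p)) (D.α y x) := by
    have key := congrArg (fun σ : Perm X => σ (D.γ (D.neg (D.τ⁻¹ p')) x)) hn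
    simp only [Perm.mul_apply] at key
    rw [Perm.inv_apply_self] at key
    rw [hpt2]
    exact key.symm
  have hpt4o : ¬ r.r ((D.α (D.neg (D.τ (D.neg (D.τ⁻¹ p)))))⁻¹ (M pt2)) D.o := by
    rw [hpt4]
    have h5 := D.γ_class (D.b_ni hpo) hαyx
    intro hcon
    exact (D.τb_no hpo) (r.iseqv.trans (r.iseqv.symm h5) hcon)
  have s5 : cmap (D.γ (D.neg (D.τ⁻¹ p)))⁻¹ (D.Fam ((D.α (D.neg (D.τ (D.neg (D.τ⁻¹ p)))))⁻¹ (M pt2))) =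
      D.Fam ((D.γ (D.neg (D.τ⁻¹ p)))⁻¹ ((D.α (D.neg (D.τ (D.neg (D.τ⁻¹ p)))))⁻¹ (M pt2))) :=
    D.q_Fam hua (D.U₀.inv_mem (D.γU₀ (D.b_ni hpo))) hpt4o
  have hfinal : (D.γ (D.neg (D.τ⁻¹ p)))⁻¹ ((D.α (D.neg (D.τ (D.neg (D.τ⁻¹ p)))))⁻¹ (M pt2)) =
      D.α y x := by
    rw [hpt4, Perm.inv_apply_self]
  calc cmap (D.α y) (D.Fam x)
      = cmap (D.γ (D.neg (D.τ⁻¹ p)))⁻¹ (cmap (D.α (D.neg (D.τ (D.neg (D.τ⁻¹ p)))))⁻¹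
          (cmap M (cmap (D.α (D.neg (D.τ (D.neg (D.τ⁻¹ p'))))) (cmap (D.γ (D.neg (D.τ⁻¹ p'))) (D.Fam x))))) := by
        rw [cmap_cmap, cmap_cmap, cmap_cmap, cmap_cmap]
        congr 1
        have : D.α y = (D.γ (D.neg (D.τ⁻¹ p)))⁻¹ *
            ((D.α (D.neg (D.τ (D.neg (D.τ⁻¹ p)))))⁻¹ * M * D.α (D.neg (D.τ (D.neg (D.τ⁻¹ p'))))) *
            D.γ (D.neg (D.τ⁻¹ p')) := by
          rw [← hn]; group
        rw [this]; group
    _ = D.Fam (D.α y x) := by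
        rw [s1, s2, s3, s4, s5, hfinal]

/-- the hard case for arbitrary elements of `U`, given (J1) -/
lemma core (hua : D.HuaC) (J1 : cmap D.τ⁻¹ D.U = D.U₀) {g : Perm X} {x : X}
    (hg : g ∈ D.U) (hx : r.r x D.i) : cmap g (D.Fam x) = D.Fam (g x) := by
  have hgo : ¬ r.r (g D.o) D.i := by rw [D.u_rel_i hg]; exact D.o_ni
  rw [D.g_eq_α hg]
  by_cases h : r.r (g D.o) D.o
  · exact D.core_o hua h hgo hx
  · exact D.core_unit hua J1 h hgo hx

/-- Claim A : conjugation of the family by elements of `U` at points of the class of `i` -/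
lemma claimA (hua : D.HuaC) {g : Perm X} {x : X} (hg : g ∈ D.U) (hx : r.r x D.i) :
    cmap g (D.Fam x) = D.Fam (g x) := by
  obtain ⟨e, heo, hei⟩ := D.exists_unit
  have h := (D.hat heo hei).core (D.hat_HuaC hua heo hei) (D.hat_J1 hua heo hei) hg hx
  rwa [D.hat_Fam hua heo hei] at h

end MD
end LocalMoufang
namespace LocalMoufang
namespace MD

open Equiv

variable {X : Type*} {r : Setoid X} (D : MD r)

/-- the dual data, with the roles of `U` and `U₀` (and of `i` and `o`) exchanged -/
noncomputable def dual (hua : D.HuaC) {e : X} (heo : ¬ r.r e D.o) (hei : ¬ r.r e D.i) :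
    MD r where
  U := D.U₀
  τ := (D.mm e)⁻¹
  i := D.o
  α := fun x => D.mm e * D.α ((D.mm e)⁻¹ x) * (D.mm e)⁻¹
  big := D.big
  hU := fun _ hq => D.qPR hq
  hτ := prInv (D.mmPR heo hei)
  ufix := fun _ hq => D.q_o hq
  c1 := by
    intro a b ha hb
    have ha' : ¬ r.r (D.τ⁻¹ a) D.i := by rw [D.τinv_rel_i]; exact ha
    have hb' : ¬ r.r (D.τ⁻¹ b) D.i := by rw [D.τinv_rel_i]; exact hb
    obtain ⟨u, ⟨huU, huv⟩, huniq⟩ := D.c1 _ _ ha' hb'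
    refine ⟨D.τ * u * D.τ⁻¹, ⟨?_, ?_⟩, ?_⟩
    · rw [D.mem_U₀, show D.τ⁻¹ * (D.τ * u * D.τ⁻¹) * D.τ = u from by group]
      exact huU
    · simp only [Perm.mul_apply]
      rw [huv, Perm.apply_inv_self]
    · rintro q ⟨hq, hqa⟩
      have h1 : D.τ⁻¹ * q * D.τ ∈ D.U := D.mem_U₀.1 hq
      have h2 : (D.τ⁻¹ * q * D.τ) (D.τ⁻¹ a) = D.τ⁻¹ b := by
        simp only [Perm.mul_apply]
        rw [Perm.apply_inv_self, hqa]
      have h3 := huniq _ ⟨h1, h2⟩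
      rw [show q = D.τ * (D.τ⁻¹ * q * D.τ) * D.τ⁻¹ from by group, h3]
  ct := by
    intro a b ha hb
    have ha' : ¬ r.r (D.τ⁻¹ a) D.i := by rw [D.τinv_rel_i]; exact ha
    have hb' : ¬ r.r (D.τ⁻¹ b) D.i := by rw [D.τinv_rel_i]; exact hb
    obtain ⟨g, hg, hrel⟩ := D.ct (D.τ⁻¹ a) (D.τ⁻¹ b) ha' hb'
    refine ⟨D.τ * g * D.τ⁻¹, ?_, ?_⟩
    · rw [D.mem_U₀, show D.τ⁻¹ * (D.τ * g * D.τ⁻¹) * D.τ = g from by group]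
      exact hg
    · simp only [Perm.mul_apply]
      have h := (D.τ_rel _ _).2 hrel
      rwa [Perm.apply_inv_self] at h
  cs := by
    intro q hq q' hq' a ha hrel b
    have ha' : ¬ r.r (D.τ⁻¹ a) D.i := by rw [D.τinv_rel_i]; exact ha
    have h1 := D.mem_U₀.1 hq
    have h2 := D.mem_U₀.1 hq'
    have hr1 : r.r ((D.τ⁻¹ * q * D.τ) (D.τ⁻¹ a)) ((D.τ⁻¹ * q' * D.τ) (D.τ⁻¹ a)) := by
      simp only [Perm.mul_apply]
      rw [Perm.apply_inv_self]
      exact (D.τinv_rel _ _).2 hrel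
    have h3 := D.cs _ h1 _ h2 _ ha' hr1 (D.τ⁻¹ b)
    simp only [Perm.mul_apply, Perm.apply_inv_self] at h3
    exact (D.τinv_rel _ _).1 h3
  c2 := by
    constructor
    · rw [D.mm_inv_o hua heo hei]; exact D.i_no
    · rw [D.mm_inv_o hua heo hei, D.mm_inv_i hua heo hei]
  hα := by
    intro x hx
    have hy : ¬ r.r ((D.mm e)⁻¹ x) D.i := by
      intro hcon
      have h := (D.mmPR heo hei _ _).1 hcon
      rw [Perm.apply_inv_self, D.mm_i heo hei] at h
      exact hx h
    constructor
    · rw [← D.mm_U hua heo hei]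
      exact mem_cmap_of (D.αU hy)
    · simp only [Perm.mul_apply]
      rw [D.mm_inv_o hua heo hei, D.mm_inv_i hua heo hei, D.αo hy, Perm.apply_inv_self]

section DualFacts

set_option linter.unusedSectionVars false

variable (hua : D.HuaC) {e : X} (heo : ¬ r.r e D.o) (hei : ¬ r.r e D.i)

include hua heo hei

lemma dual_γ (y : X) : (D.dual hua heo hei).γ y = D.α ((D.mm e)⁻¹ y) := by
  show (D.mm e)⁻¹ * (D.mm e * D.α ((D.mm e)⁻¹ y) * (D.mm e)⁻¹) * ((D.mm e)⁻¹)⁻¹ = _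
  group

lemma dual_τ_U : cmap (D.dual hua heo hei).τ (D.dual hua heo hei).U = D.U := by
  show cmap (D.mm e)⁻¹ D.U₀ = D.U
  have h := D.mm_U hua heo hei
  rw [cmap_eq_iff] at h
  exact h.symm

lemma dual_HuaC : (D.dual hua heo hei).HuaC := by
  intro x hxo' hxi'
  have hEo : (D.dual hua heo hei).o = D.i := D.mm_inv_o hua heo hei
  have hxI : ¬ r.r x D.i := by rw [← hEo]; exact hxo'
  have hxO : ¬ r.r x D.o := hxi'
  rw [(D.dual hua heo hei).hua_eq_mm, ← cmap_cmap, D.dual_τ_U hua heo hei, mm,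
    ← cmap_cmap, ← cmap_cmap, ← D.Fam_i]
  have hαx : (D.dual hua heo hei).α x ∈ D.U₀ := ((D.dual hua heo hei).hα x hxi').1
  have hαxi : (D.dual hua heo hei).α x D.i = x := by
    have h := ((D.dual hua heo hei).hα x hxi').2
    rwa [show (D.dual hua heo hei).τ (D.dual hua heo hei).i = (D.mm e)⁻¹ D.o from rfl,
      D.mm_inv_o hua heo hei] at h
  have s1 : cmap ((D.dual hua heo hei).α x) (D.Fam D.i) = D.Fam x := by
    rw [D.q_Fam hua hαx D.i_no, hαxi]
  rw [s1]
  have hy : (D.dual hua heo hei).neg ((D.dual hua heo hei).τ⁻¹ x) = D.mm e (D.neg x) := by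
    show ((D.dual hua heo hei).α ((D.dual hua heo hei).τ⁻¹ x))⁻¹ (D.dual hua heo hei).o =
      D.mm e (D.neg x)
    have h1 : (D.dual hua heo hei).τ⁻¹ x = D.mm e x := by
      show ((D.mm e)⁻¹)⁻¹ x = D.mm e x
      rw [inv_inv]
    rw [h1]
    have h2 : (D.dual hua heo hei).α (D.mm e x) = D.mm e * D.α x * (D.mm e)⁻¹ := by
      show D.mm e * D.α ((D.mm e)⁻¹ (D.mm e x)) * (D.mm e)⁻¹ = _
      rw [Perm.inv_apply_self]
    rw [h2]
    show (D.mm e * D.α x * (D.mm e)⁻¹)⁻¹ ((D.mm e)⁻¹ D.o) = D.mm e (D.neg x)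
    simp only [mul_inv_rev, inv_inv, Perm.mul_apply]
    rw [D.mm_inv_o hua heo hei, D.mm_inv_i hua heo hei]
    rfl
  have hbE : (D.dual hua heo hei).γ ((D.dual hua heo hei).neg ((D.dual hua heo hei).τ⁻¹ x)) =
      (D.α x)⁻¹ := by
    rw [hy, D.dual_γ hua heo hei, Perm.inv_apply_self, D.α_neg hxI]
  rw [hbE]
  have s2 : cmap (D.α x)⁻¹ (D.Fam x) = D.U₀ := by
    have h := D.u_Fam (D.U.inv_mem (D.αU hxI)) hxI
    rw [h, D.α_inv_self hxI, D.Fam_o]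
  rw [s2]
  exact cmap_self (((D.dual hua heo hei).hα _
    ((D.dual hua heo hei).c_ni hxo' hxi')).1)

lemma dual_Fam : (D.dual hua heo hei).Fam = D.Fam := by
  funext x
  by_cases hx : r.r x D.o
  · have hxi : ¬ r.r x D.i := fun hcon => D.o_ni (r.iseqv.trans (r.iseqv.symm hx) hcon)
    rw [(D.dual hua heo hei).Fam_rel hx, D.Fam_nrel' hxi]
    have h1 : (D.dual hua heo hei).γ ((D.dual hua heo hei).τ⁻¹ x) = D.α x := by
      have h2 : (D.dual hua heo hei).τ⁻¹ x = D.mm e x := by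
        show ((D.mm e)⁻¹)⁻¹ x = D.mm e x
        rw [inv_inv]
      rw [h2, D.dual_γ hua heo hei, Perm.inv_apply_self]
    rw [h1]
    rfl
  · rw [(D.dual hua heo hei).Fam_nrel hx, ← cmap_cmap, D.dual_τ_U hua heo hei]
    have hy : ¬ r.r ((D.mm e)⁻¹ x) D.i := by
      intro hcon
      have h := (D.mmPR heo hei _ _).1 hcon
      rw [Perm.apply_inv_self, D.mm_i heo hei] at h
      exact hx h
    rw [show (D.dual hua heo hei).α x = D.mm e * D.α ((D.mm e)⁻¹ x) * (D.mm e)⁻¹ from rfl,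
      D.mm_α_mm hua heo hei hy, Perm.apply_inv_self]
    exact (D.Fam_no hua hx).symm

end DualFacts

/-- Claim A for `U₀` : conjugation of the family at points of the class of `o` -/
lemma claimA₀ (hua : D.HuaC) {q : Perm X} {x : X} (hq : q ∈ D.U₀) (hx : r.r x D.o) :
    cmap q (D.Fam x) = D.Fam (q x) := by
  obtain ⟨e, heo, hei⟩ := D.exists_unit
  have h := (D.dual hua heo hei).claimA (D.dual_HuaC hua heo hei) hq hx
  rwa [D.dual_Fam hua heo hei] at h

end MD
end LocalMoufang
namespace LocalMoufang
namespace MD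

open Equiv

variable {X : Type*} {r : Setoid X} (D : MD r)

/-- full conjugation property for elements of `U` -/
lemma U_S (hua : D.HuaC) {g : Perm X} (hg : g ∈ D.U) (x : X) :
    cmap g (D.Fam x) = D.Fam (g x) := by
  by_cases hx : r.r x D.i
  · exact D.claimA hua hg hx
  · exact D.u_Fam hg hx

/-- full conjugation property for elements of `U₀` -/
lemma U₀_S (hua : D.HuaC) {q : Perm X} (hq : q ∈ D.U₀) (x : X) :
    cmap q (D.Fam x) = D.Fam (q x) := by
  by_cases hx : r.r x D.o
  · exact D.claimA₀ hua hq hx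
  · exact D.q_Fam hua hq hx

/-- the subgroup of permutations with the conjugation property -/
noncomputable def Sgrp : Subgroup (Perm X) where
  carrier := {g | ∀ x, cmap g (D.Fam x) = D.Fam (g x)}
  one_mem' := by
    intro x
    simp only [cmap_one, Perm.one_apply]
  mul_mem' := by
    intro a b ha hb x
    rw [← cmap_cmap, hb x, ha (b x)]
    rfl
  inv_mem' := by
    intro a ha x
    have h := ha (a⁻¹ x)
    rw [Perm.apply_inv_self] at h
    rw [← h, cmap_cmap, inv_mul_cancel, cmap_one]

lemma mem_Sgrp {g : Perm X} : g ∈ D.Sgrp ↔ ∀ x, cmap g (D.Fam x) = D.Fam (g x) :=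
  Iff.rfl

/-- (LM2) -/
lemma lm2 (hua : D.HuaC) (x : X) (g : Perm X) (hg : g ∈ ⨆ y, D.Fam y) :
    cmap g (D.Fam x) = D.Fam (g x) := by
  have hle : (⨆ y, D.Fam y) ≤ D.Sgrp := by
    refine iSup_le fun y => ?_
    intro g hg
    by_cases hy : r.r y D.i
    · have hτy : ¬ r.r (D.τ⁻¹ y) D.i := by
        rw [D.τinv_rel_i]
        intro hcon
        exact D.o_ni (r.iseqv.trans (r.iseqv.symm hcon) hy)
      rw [D.Fam_rel hy, mem_cmap] at hg
      have hγ : D.γ (D.τ⁻¹ y) ∈ D.U₀ := D.γU₀ hτy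
      rw [show g = D.γ (D.τ⁻¹ y) * ((D.γ (D.τ⁻¹ y))⁻¹ * g * D.γ (D.τ⁻¹ y)) *
        (D.γ (D.τ⁻¹ y))⁻¹ from by group]
      exact mul_mem (mul_mem (D.mem_Sgrp.2 (D.U₀_S hua hγ)) (D.mem_Sgrp.2 (D.U_S hua hg)))
        (inv_mem (D.mem_Sgrp.2 (D.U₀_S hua hγ)))
    · rw [D.Fam_nrel' hy, mem_cmap] at hg
      rw [show g = D.α y * ((D.α y)⁻¹ * g * D.α y) * (D.α y)⁻¹ from by group]
      exact mul_mem (mul_mem (D.mem_Sgrp.2 (D.U_S hua (D.αU hy)))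
        (D.mem_Sgrp.2 (D.U₀_S hua hg))) (inv_mem (D.mem_Sgrp.2 (D.U_S hua (D.αU hy))))
  exact hle hg x

/-- the conjugating permutations `σ_x` -/
noncomputable def σm (x : X) : Perm X :=
  letI := Classical.dec (r.r x D.i)
  if r.r x D.i then D.γ (D.τ⁻¹ x) else D.α x * D.τ

lemma σm_rel {x : X} (hx : r.r x D.i) : D.σm x = D.γ (D.τ⁻¹ x) := by
  rw [σm, if_pos hx]

lemma σm_nrel {x : X} (hx : ¬ r.r x D.i) : D.σm x = D.α x * D.τ := by
  rw [σm, if_neg hx]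

lemma Fam_eq_σ (x : X) : D.Fam x = cmap (D.σm x) D.U := by
  by_cases hx : r.r x D.i
  · rw [D.Fam_rel hx, D.σm_rel hx]
  · rw [D.Fam_nrel hx, D.σm_nrel hx]

lemma σPR (x : X) : PreservesRel r (D.σm x) := by
  by_cases hx : r.r x D.i
  · rw [D.σm_rel hx]
    refine D.qPR (D.γU₀ ?_)
    rw [D.τinv_rel_i]
    intro hcon
    exact D.o_ni (r.iseqv.trans (r.iseqv.symm hcon) hx)
  · rw [D.σm_nrel hx]
    exact prMul (D.uPR (D.αU hx)) D.hτ

lemma σ_i (x : X) : D.σm x D.i = x := by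
  by_cases hx : r.r x D.i
  · have hτy : ¬ r.r (D.τ⁻¹ x) D.i := by
      rw [D.τinv_rel_i]
      intro hcon
      exact D.o_ni (r.iseqv.trans (r.iseqv.symm hcon) hx)
    rw [D.σm_rel hx, D.γ_i hτy, Perm.apply_inv_self]
  · rw [D.σm_nrel hx]
    simp only [Perm.mul_apply]
    exact D.αo hx

lemma σinv_i (x : X) : (D.σm x)⁻¹ x = D.i := by
  rw [Perm.inv_def, Equiv.symm_apply_eq]
  exact (D.σ_i x).symm

lemma σinv_rel_i (x a : X) : r.r ((D.σm x)⁻¹ a) D.i ↔ r.r a x := by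
  have h := (prInv (D.σPR x)) a x
  rw [D.σinv_i x] at h
  exact h.symm

lemma Fam_PR {x : X} {g : Perm X} (hg : g ∈ D.Fam x) : PreservesRel r g := by
  rw [D.Fam_eq_σ, mem_cmap] at hg
  rw [show g = D.σm x * ((D.σm x)⁻¹ * g * D.σm x) * (D.σm x)⁻¹ from by group]
  exact prMul (prMul (D.σPR x) (D.uPR hg)) (prInv (D.σPR x))

lemma Fam_fix {x : X} {g : Perm X} (hg : g ∈ D.Fam x) : g x = x := by
  rw [D.Fam_eq_σ, mem_cmap] at hg
  have h : g x = D.σm x (((D.σm x)⁻¹ * g * D.σm x) ((D.σm x)⁻¹ x)) := by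
    simp only [Perm.mul_apply, Perm.apply_inv_self]
  rw [h, D.σinv_i, D.ufix _ hg, D.σ_i]

lemma Fam_lm1 (x a b : X) (ha : ¬ r.r a x) (hb : ¬ r.r b x) :
    ∃! g : Perm X, g ∈ D.Fam x ∧ g a = b := by
  have ha' : ¬ r.r ((D.σm x)⁻¹ a) D.i := by rw [D.σinv_rel_i]; exact ha
  have hb' : ¬ r.r ((D.σm x)⁻¹ b) D.i := by rw [D.σinv_rel_i]; exact hb
  obtain ⟨u, ⟨huU, huv⟩, huniq⟩ := D.c1 _ _ ha' hb'
  refine ⟨D.σm x * u * (D.σm x)⁻¹, ⟨?_, ?_⟩, ?_⟩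
  · rw [D.Fam_eq_σ]
    exact mem_cmap_of huU
  · simp only [Perm.mul_apply]
    rw [huv, Perm.apply_inv_self]
  · rintro g ⟨hg, hgv⟩
    rw [D.Fam_eq_σ, mem_cmap] at hg
    have h2 : ((D.σm x)⁻¹ * g * D.σm x) ((D.σm x)⁻¹ a) = (D.σm x)⁻¹ b := by
      simp only [Perm.mul_apply]
      rw [Perm.apply_inv_self, hgv]
    have h4 := huniq _ ⟨hg, h2⟩
    rw [show g = D.σm x * ((D.σm x)⁻¹ * g * D.σm x) * (D.σm x)⁻¹ from by group, h4]

lemma Fam_lm1't (x a b : X) (ha : ¬ r.r a x) (hb : ¬ r.r b x) :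
    ∃ g ∈ D.Fam x, r.r (g a) b := by
  have ha' : ¬ r.r ((D.σm x)⁻¹ a) D.i := by rw [D.σinv_rel_i]; exact ha
  have hb' : ¬ r.r ((D.σm x)⁻¹ b) D.i := by rw [D.σinv_rel_i]; exact hb
  obtain ⟨u, hu, hrel⟩ := D.ct _ _ ha' hb'
  refine ⟨D.σm x * u * (D.σm x)⁻¹, by rw [D.Fam_eq_σ]; exact mem_cmap_of hu, ?_⟩
  simp only [Perm.mul_apply]
  have h := (D.σPR x _ _).1 hrel
  rwa [Perm.apply_inv_self] at h

lemma Fam_lm1's (x : X) (g : Perm X) (hg : g ∈ D.Fam x) (h : Perm X) (hh : h ∈ D.Fam x)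
    (a : X) (ha : ¬ r.r a x) (hrel : r.r (g a) (h a)) (b : X) : r.r (g b) (h b) := by
  rw [D.Fam_eq_σ, mem_cmap] at hg hh
  have ha' : ¬ r.r ((D.σm x)⁻¹ a) D.i := by rw [D.σinv_rel_i]; exact ha
  have hr1 : r.r (((D.σm x)⁻¹ * g * D.σm x) ((D.σm x)⁻¹ a))
      (((D.σm x)⁻¹ * h * D.σm x) ((D.σm x)⁻¹ a)) := by
    simp only [Perm.mul_apply, Perm.apply_inv_self]
    exact (prInv (D.σPR x) _ _).1 hrel
  have h2 := D.cs _ hg _ hh _ ha' hr1 ((D.σm x)⁻¹ b)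
  simp only [Perm.mul_apply, Perm.apply_inv_self] at h2
  exact ((prInv (D.σPR x)) _ _).2 h2

lemma σ_pair {x y : X} (hxy : r.r x y) (a : X) : r.r (D.σm x a) (D.σm y a) := by
  by_cases hx : r.r x D.i
  · have hy : r.r y D.i := r.iseqv.trans (r.iseqv.symm hxy) hx
    have hτx : ¬ r.r (D.τ⁻¹ x) D.i := by
      rw [D.τinv_rel_i]
      intro hcon
      exact D.o_ni (r.iseqv.trans (r.iseqv.symm hcon) hx)
    have hτy : ¬ r.r (D.τ⁻¹ y) D.i := by
      rw [D.τinv_rel_i]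
      intro hcon
      exact D.o_ni (r.iseqv.trans (r.iseqv.symm hcon) hy)
    rw [D.σm_rel hx, D.σm_rel hy, γ, γ]
    simp only [Perm.mul_apply]
    exact (D.τ_rel _ _).2 (D.α_pair hτx hτy ((D.τinv_rel _ _).2 hxy) _)
  · have hy : ¬ r.r y D.i := fun hcon => hx (r.iseqv.trans hxy hcon)
    rw [D.σm_nrel hx, D.σm_nrel hy]
    simp only [Perm.mul_apply]
    exact D.α_pair hx hy hxy _
  
lemma conj_pair {σ1 σ2 u : Perm X} (h1 : PreservesRel r σ1) (h2 : PreservesRel r σ2)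
    (hu : PreservesRel r u) (hpt : ∀ a, r.r (σ1 a) (σ2 a)) (a : X) :
    r.r ((σ1 * u * σ1⁻¹) a) ((σ2 * u * σ2⁻¹) a) := by
  have e1 : r.r (σ2⁻¹ a) (σ1⁻¹ a) := by
    have h := (prInv h1 _ _).1 (hpt (σ2⁻¹ a))
    rwa [Perm.inv_apply_self, Perm.apply_inv_self] at h
  have e2 : r.r (u (σ2⁻¹ a)) (u (σ1⁻¹ a)) := (hu _ _).1 e1
  have e3 : r.r (σ1 (u (σ2⁻¹ a))) (σ1 (u (σ1⁻¹ a))) := (h1 _ _).1 e2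
  have e4 : r.r (σ1 (u (σ2⁻¹ a))) (σ2 (u (σ2⁻¹ a))) := hpt _
  simp only [Perm.mul_apply]
  exact r.iseqv.trans (r.iseqv.symm e3) e4

lemma Fam_lm0 (x y : X) (hxy : r.r x y) (g : Perm X) (hg : g ∈ D.Fam x) :
    ∃ h ∈ D.Fam y, ∀ a, r.r (g a) (h a) := by
  rw [D.Fam_eq_σ, mem_cmap] at hg
  refine ⟨D.σm y * ((D.σm x)⁻¹ * g * D.σm x) * (D.σm y)⁻¹,
    by rw [D.Fam_eq_σ]; exact mem_cmap_of hg, ?_⟩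
  intro a
  have h := conj_pair (D.σPR x) (D.σPR y) (D.uPR hg) (D.σ_pair hxy) a
  have h' : (D.σm x * ((D.σm x)⁻¹ * g * D.σm x) * (D.σm x)⁻¹) a = g a := by
    simp only [Perm.mul_apply, Perm.apply_inv_self, Perm.inv_apply_self]
  rw [h'] at h
  exact h

end MD
end LocalMoufang
namespace LocalMoufang
namespace MD

open Equiv

variable {X : Type*} {r : Setoid X} (D : MD r)

/-- backward direction : the Hua condition implies that the construction is a
local Moufang set -/
lemma backward (hua : D.HuaC) : IsLocalMoufangSet r D.Fam := by
  refine ⟨⟨D.big, fun x g hg => D.Fam_PR hg, D.Fam_lm0, fun x g hg => D.Fam_fix hg,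
    D.Fam_lm1, D.Fam_lm1't, D.Fam_lm1's⟩, ?_⟩
  intro x g hg
  exact D.lm2 hua x g hg

/-- forward direction : if the construction is a local Moufang set then the Hua
maps of units normalize `U` -/
lemma forward (M : IsLocalMoufangSet r D.Fam) : D.HuaC := by
  intro x hxo hxi
  have hsub_i : D.U ≤ ⨆ y, D.Fam y := by
    rw [← D.Fam_i]
    exact le_iSup _ D.i
  have hsub_o : D.U₀ ≤ ⨆ y, D.Fam y := by
    rw [← D.Fam_o]
    exact le_iSup _ D.o
  have hmm : D.mm x ∈ ⨆ y, D.Fam y := by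
    rw [mm]
    exact mul_mem (mul_mem (hsub_i (D.αU (D.c_ni hxo hxi))) (hsub_o (D.γU₀ (D.b_ni hxo))))
      (hsub_i (D.αU hxi))
  have h := M.lm2 D.o (D.mm x) hmm
  rw [D.mm_o hxo hxi, D.Fam_o, D.Fam_i] at h
  rw [D.hua_eq_mm, ← cmap_cmap]
  exact h

end MD
end LocalMoufang

/-- the construction `M(U, τ)` from a set with equivalence relation
`(X, ∼)` with more than 2 classes, a group `U ≤ Sym(X, ∼)` and `τ ∈ Sym(X, ∼)`
satisfying (C1), (C1') and (C2) is a local Moufang set if and only if all Hua maps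
`h_x` of units `x` normalize `U`. -/
theorem statement8 (r : Setoid X) (U : Subgroup (Equiv.Perm X)) (τ : Equiv.Perm X)
    (i : X) (α : X → Equiv.Perm X)
    (big : ∃ a b c : X, ¬ r.r a b ∧ ¬ r.r a c ∧ ¬ r.r b c)
    (hU : ∀ g ∈ U, PreservesRel r g) (hτp : PreservesRel r τ)
    -- (C1)
    (c1fix : ∀ g ∈ U, g i = i)
    (c1 : ∀ a b : X, ¬ r.r a i → ¬ r.r b i → ∃! g : Equiv.Perm X, g ∈ U ∧ g a = b)
    -- (C1')
    (c1't : ∀ a b : X, ¬ r.r a i → ¬ r.r b i → ∃ g ∈ U, r.r (g a) b)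
    (c1's : ∀ g ∈ U, ∀ h ∈ U, ∀ a : X, ¬ r.r a i → r.r (g a) (h a) →
      ∀ b : X, r.r (g b) (h b))
    -- (C2): `∞τ ≁ ∞` and `∞τ² = ∞`; we write `0 := ∞τ = τ i`
    (c2 : ¬ r.r (τ i) i ∧ τ (τ i) = i)
    -- `α x` is the unique element of `U` mapping `0` to `x`, for `x ≁ ∞`
    (hα : ∀ x : X, ¬ r.r x i → α x ∈ U ∧ α x (τ i) = x) :
    IsLocalMoufangSet r (constructedU r U τ α i) ↔
      ∀ x : X, ¬ r.r x (τ i) → ¬ r.r x i →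
        ∀ u : Equiv.Perm X, u ∈ U ↔ huaOf α τ (τ i) x * u * (huaOf α τ (τ i) x)⁻¹ ∈ U := by
  let D : LocalMoufang.MD r := ⟨U, τ, i, α, big, hU, hτp, c1fix, c1, c1't, c1's, c2, hα⟩
  constructor
  · intro M x hxo hxi u
    have hh := D.forward M x hxo hxi
    constructor
    · intro hu
      have h2 : huaOf α τ (τ i) x * u * (huaOf α τ (τ i) x)⁻¹ ∈
          LocalMoufang.cmap (huaOf α τ (τ i) x) U := LocalMoufang.mem_cmap_of hu
      rwa [show LocalMoufang.cmap (huaOf α τ (τ i) x) U = U from hh] at h2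
    · intro hu
      rw [← show LocalMoufang.cmap (huaOf α τ (τ i) x) U = U from hh,
        LocalMoufang.mem_cmap] at hu
      have e : (huaOf α τ (τ i) x)⁻¹ * (huaOf α τ (τ i) x * u * (huaOf α τ (τ i) x)⁻¹) *
          huaOf α τ (τ i) x = u := by group
      rwa [e] at hu
  · intro H
    refine D.backward ?_
    intro x hxo hxi
    ext a
    rw [LocalMoufang.mem_cmap]
    have h1 := H x hxo hxi ((huaOf α τ (τ i) x)⁻¹ * a * huaOf α τ (τ i) x)
    have e : huaOf α τ (τ i) x * ((huaOf α τ (τ i) x)⁻¹ * a * huaOf α τ (τ i) x) *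
        (huaOf α τ (τ i) x)⁻¹ = a := by group
    rw [e] at h1
    exact h1
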